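/- Let A be an N×s complex matrix and B an N×t complex matrix with A*A = I_s and B*B = I_t. Put U_B = 2·B·B* − I_N and U_A = 2·A·A* − I_N, and U = U_B·U_A. Then for every complex number u with u ≠ 1 and u ≠ −1, det(I_N − u·U) = (1−u)^(N−(s+t)) · (1+u)^(t−s) · det((1+u)²·I_s − 4u·(A*·B)·(B*·A)), where the exponents N−(s+t) and t−s are integers (possibly negative). -/

import Mathlib

open Matrix

lemma staggered_aux_scalar (c w : ℂ) (hc : c ≠ 0) (hw : w ≠ 0) (N s t : ℕ) :
    c ^ N * (-w / c) ^ t * ((c * w)⁻¹) ^ s * (-1:ℂ) ^ (N + s)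
      = ((-c) ^ N / ((-c) ^ s * (-c) ^ t)) * (w ^ t / w ^ s) := by
  have hinv : ∀ k : ℕ, ((-c:ℂ) ^ k)⁻¹ = (-1)^k * (c ^ k)⁻¹ := by
    intro k; rw [neg_pow, mul_inv, ← inv_pow, inv_neg, inv_one]
  rw [div_eq_mul_inv ((-c)^N), div_eq_mul_inv (w^t), mul_inv ((-c)^s) ((-c)^t), hinv, hinv,
    neg_pow c N, neg_div, neg_pow (w/c), pow_add]
  field_simp
  ring_nf
  simp only [inv_pow]
  field_simp

/-- Key lemma (Theorem 3.1, second equality): for isometries `A` (N×s) and `B` (N×t),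
with `U = (2 B Bᴴ - I)(2 A Aᴴ - I)`, the determinant `det(I - u U)` factors as
`(1-u)^(N-(s+t)) (1+u)^(t-s) det((1+u)² I_s - 4u Aᴴ B Bᴴ A)`. -/
theorem staggered_key_lemma_second
    (N s t : ℕ) (A : Matrix (Fin N) (Fin s) ℂ) (B : Matrix (Fin N) (Fin t) ℂ)
    (hA : Aᴴ * A = 1) (hB : Bᴴ * B = 1) (u : ℂ) (hu1 : u ≠ 1) (hu2 : u ≠ -1) :
    det ((1 : Matrix (Fin N) (Fin N) ℂ) -
        u • (((2 : ℂ) • (B * Bᴴ) - 1) * ((2 : ℂ) • (A * Aᴴ) - 1)))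
      = (1 - u) ^ ((N : ℤ) - ((s : ℤ) + (t : ℤ))) * (1 + u) ^ ((t : ℤ) - (s : ℤ)) *
        det ((1 + u) ^ 2 • (1 : Matrix (Fin s) (Fin s) ℂ) -
          (4 * u) • (Aᴴ * B * (Bᴴ * A))) := by
  have hc : (u - 1 : ℂ) ≠ 0 := sub_ne_zero.mpr hu1
  have hw : (1 + u : ℂ) ≠ 0 := by intro h; exact hu2 (by linear_combination h)
  set c : ℂ := u - 1 with hc_def
  set w : ℂ := 1 + u with hw_def
  have hP : (A * Aᴴ) * (A * Aᴴ) = A * Aᴴ := by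
    rw [Matrix.mul_assoc, ← Matrix.mul_assoc Aᴴ, hA, Matrix.one_mul]
  have hQ : (B * Bᴴ) * (B * Bᴴ) = B * Bᴴ := by
    rw [Matrix.mul_assoc, ← Matrix.mul_assoc Bᴴ, hB, Matrix.one_mul]
  have hUA2 : ((2:ℂ) • (A * Aᴴ) - 1) * ((2:ℂ) • (A * Aᴴ) - 1) = 1 := by
    simp only [sub_mul, mul_sub, Matrix.smul_mul, Matrix.mul_smul, one_mul, mul_one,
      smul_smul, hP]
    module
  -- Step 1 : split off det UA
  have key1 : (1 : Matrix (Fin N) (Fin N) ℂ) -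
      u • (((2:ℂ) • (B * Bᴴ) - 1) * ((2:ℂ) • (A * Aᴴ) - 1))
      = ((((2:ℂ) • (A * Aᴴ) - 1) - u • ((2:ℂ) • (B * Bᴴ) - 1)) * ((2:ℂ) • (A * Aᴴ) - 1)) := by
    conv_rhs => rw [sub_mul, Matrix.smul_mul]
    rw [hUA2]
  have hdetUA : det ((2:ℂ) • (A * Aᴴ) - 1) = (-1:ℂ)^(N+s) := by
    have h1 : (2:ℂ) • (A * Aᴴ) - 1 = -((1 : Matrix (Fin N) (Fin N) ℂ) + ((-2:ℂ) • A) * Aᴴ) := by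
      conv_rhs => rw [Matrix.smul_mul]
      module
    rw [h1, det_neg, det_one_add_mul_comm, Matrix.mul_smul, hA]
    have h2 : (1 : Matrix (Fin s) (Fin s) ℂ) + (-2:ℂ) • 1 = (-1:ℂ) • 1 := by module
    rw [h2, det_smul, det_one, mul_one]
    simp [pow_add, Fintype.card_fin]
  -- the middle matrix M and the auxiliary S, V
  set d : ℂ := -2 * u / (c * w) with hd_def
  set S : Matrix (Fin N) (Fin N) ℂ := c • 1 + (-2 * u) • (B * Bᴴ) with hS_def
  set V : Matrix (Fin N) (Fin N) ℂ := c⁻¹ • 1 + d • (B * Bᴴ) with hV_def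
  have hM : ((2:ℂ) • (A * Aᴴ) - 1) - u • ((2:ℂ) • (B * Bᴴ) - 1) = S + (2:ℂ) • (A * Aᴴ) := by
    rw [hS_def, hc_def]
    module
  have hSV : S * V = 1 := by
    rw [hS_def, hV_def]
    simp only [add_mul, mul_add, Matrix.smul_mul, Matrix.mul_smul, mul_one, one_mul,
      smul_smul, hQ]
    match_scalars
    · field_simp
    · rw [hd_def, hc_def, hw_def]; field_simp [show (1 + u : ℂ) ≠ 0 from hw]; ring
  have hVS : V * S = 1 := by
    rw [hS_def, hV_def]
    simp only [add_mul, mul_add, Matrix.smul_mul, Matrix.mul_smul, mul_one, one_mul,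
      smul_smul, hQ]
    match_scalars
    · field_simp
    · rw [hd_def, hc_def, hw_def]; field_simp [show (1 + u : ℂ) ≠ 0 from hw]; ring
  -- det S
  have hdetS : det S = c ^ N * (-w / c) ^ t := by
    have h1 : S = c • ((1 : Matrix (Fin N) (Fin N) ℂ) + ((-2 * u / c) • B) * Bᴴ) := by
      rw [hS_def, Matrix.smul_mul]
      match_scalars
      · field_simp
      · field_simp
    rw [h1, det_smul, Fintype.card_fin, det_one_add_mul_comm, Matrix.mul_smul, hB]
    have h2 : (1 : Matrix (Fin t) (Fin t) ℂ) + (-2 * u / c) • 1 = (-w / c) • 1 := by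
      match_scalars
      rw [hw_def, hc_def]; field_simp; ring
    rw [h2, det_smul, det_one, mul_one, Fintype.card_fin]
  -- V * M
  have hVM : V * (S + (2:ℂ) • (A * Aᴴ)) = 1 + ((2:ℂ) • (V * A)) * Aᴴ := by
    rw [mul_add, hVS, Matrix.mul_smul, Matrix.smul_mul, Matrix.mul_assoc]
  have hdetVM : det (V * (S + (2:ℂ) • (A * Aᴴ)))
      = ((c * w)⁻¹) ^ s * det ((1 + u) ^ 2 • (1 : Matrix (Fin s) (Fin s) ℂ) -
          (4 * u) • (Aᴴ * B * (Bᴴ * A))) := by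
    rw [hVM, det_one_add_mul_comm]
    have h3 : (1 : Matrix (Fin s) (Fin s) ℂ) + Aᴴ * ((2:ℂ) • (V * A))
        = ((c * w)⁻¹) • ((1 + u) ^ 2 • (1 : Matrix (Fin s) (Fin s) ℂ) -
          (4 * u) • (Aᴴ * B * (Bᴴ * A))) := by
      rw [hV_def]
      simp only [Matrix.add_mul, Matrix.mul_add, Matrix.smul_mul, Matrix.mul_smul,
        Matrix.mul_one, Matrix.one_mul, smul_smul, Matrix.mul_assoc, hA, smul_sub]
      match_scalars
      · rw [hw_def, hc_def]; field_simp; ring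
      · rw [hd_def, hw_def, hc_def]; field_simp; ring
    rw [h3, det_smul, Fintype.card_fin]
  -- assemble
  rw [key1, det_mul, hdetUA, hM]
  have : det (S + (2:ℂ) • (A * Aᴴ)) = det S * det (V * (S + (2:ℂ) • (A * Aᴴ))) := by
    rw [← det_mul, ← Matrix.mul_assoc, hSV, Matrix.one_mul]
  rw [this, hdetS, hdetVM]
  have h1u : (1 - u : ℂ) = -c := by rw [hc_def]; ring
  rw [h1u]
  have e1 : (-c : ℂ) ^ ((N : ℤ) - ((s : ℤ) + (t : ℤ))) = (-c)^N / ((-c)^s * (-c)^t) := by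
    rw [zpow_sub₀ (neg_ne_zero.mpr hc), zpow_add₀ (neg_ne_zero.mpr hc)]
    norm_num [zpow_natCast]
  have e2 : (w : ℂ) ^ ((t : ℤ) - (s : ℤ)) = w^t / w^s := by
    rw [zpow_sub₀ hw]
    norm_num [zpow_natCast]
  rw [e1, e2]
  linear_combination (det ((1 + u) ^ 2 • (1 : Matrix (Fin s) (Fin s) ℂ) -
      (4 * u) • (Aᴴ * B * (Bᴴ * A)))) * staggered_aux_scalar c w hc hw N s t
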